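/- Let (P_m)_{m≥1} be a sequence of polytopes in R^n with P_{m+1} ⊆ P_m for all m ≥ 1. Let L be the set of all points x ∈ R^n for which there exists a sequence (v_m)_{m≥1} with v_m a vertex (extreme point) of P_m for every m and v_m → x. Then ⋂_{m=1}^∞ P_m equals the closure of the convex hull of L. -/

import Mathlib

/-! ## Rooted binary trees, shapes, restriction, distributions -/

/-- Rooted binary trees with leaves labelled by `α`:
a tree is either a single (labelled) leaf, or an (ordered) pair of subtrees. -/
inductive RBT (α : Type) : Type
  | leaf (a : α) : RBT α
  | node (l r : RBT α) : RBT α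
  deriving DecidableEq

namespace RBT

variable {α β : Type}

/-- The multiset of leaf labels of a tree. -/
def leaves : RBT α → Multiset α
  | leaf a => {a}
  | node l r => leaves l + leaves r

/-- The number of leaves of a tree. -/
def numLeaves : RBT α → ℕ
  | leaf _ => 1
  | node l r => numLeaves l + numLeaves r

/-- Relabel the leaves of a tree. -/
def map (f : α → β) : RBT α → RBT β
  | leaf a => leaf (f a)
  | node l r => node (map f l) (map f r)

end RBT

/-- Unlabelled rooted binary trees. -/
abbrev UTree : Type := RBT Unit

namespace RBT

variable {α : Type}

/-- Forget the leaf labels of a tree. -/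
def forget (t : RBT α) : UTree := t.map fun _ => ()

/-- Structural comparison on unlabelled trees (a leaf is smaller than an internal
node; internal nodes are compared lexicographically on their children). -/
def cmpT : UTree → UTree → Ordering
  | leaf _, leaf _ => .eq
  | leaf _, node _ _ => .lt
  | node _ _, leaf _ => .gt
  | node a b, node c d => (cmpT a c).then (cmpT b d)

/-- Canonical form (AHU) of an unlabelled rooted binary tree: recursively put the
two children of every internal vertex in nondecreasing `cmpT` order.  Two rooted
binary trees are isomorphic (equal as *shapes*) iff their canonical forms are
equal, so canonical forms faithfully encode the set `RB_U` of tree shapes. -/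
def canon : UTree → UTree
  | leaf a => leaf a
  | node l r =>
      let l' := canon l
      let r' := canon r
      if cmpT l' r' = Ordering.gt then node r' l' else node l' r'

/-- The shape (leaf-relabelling isomorphism class, encoded as a canonical form)
of a labelled tree. -/
def shape (t : RBT α) : UTree := canon (forget t)

/-- Restriction `T|_A` of a tree to the leaves with labels in `A`: delete all
leaves outside `A` and suppress the resulting degree-two vertices (the result is
rooted at the most recent common ancestor of `A`); `none` if no leaf survives. -/
def restrict [DecidableEq α] (A : Finset α) : RBT α → Option (RBT α)
  | leaf a => if a ∈ A then some (leaf a) else none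
  | node l r =>
      match restrict A l, restrict A r with
      | some l', some r' => some (node l' r')
      | some l', none => some l'
      | none, some r' => some r'
      | none, none => none

end RBT

/-- `T ∈ RB_L(n)`: the leaves of `T` are labelled bijectively by `[n] = {0, …, n-1}`. -/
def IsPhylo (n : ℕ) (T : RBT ℕ) : Prop := T.leaves = Multiset.range n

instance (n : ℕ) (T : RBT ℕ) : Decidable (IsPhylo n T) :=
  inferInstanceAs (Decidable (T.leaves = Multiset.range n))

/-- `p` is a probability distribution on `RB_L(n)` (viewed as a vector with
coordinates indexed by labelled trees): nonnegative, supported on `RB_L(n)`,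
with total mass one. -/
structure IsDist (n : ℕ) (p : RBT ℕ → ℝ) : Prop where
  nonneg : ∀ T, 0 ≤ p T
  supp : ∀ T, ¬ IsPhylo n T → p T = 0
  total : HasSum p 1

/-- `p` is exchangeable: relabelling the leaves by any permutation of `[n]`
does not change probabilities. -/
def Exchangeable (n : ℕ) (p : RBT ℕ → ℝ) : Prop :=
  ∀ σ : Equiv.Perm ℕ, (∀ i, i < n → σ i < n) → ∀ T : RBT ℕ, p (T.map ⇑σ) = p T

/-- `EX_n`: the exchangeable probability distributions on `RB_L(n)`. -/
def EX (n : ℕ) : Set (RBT ℕ → ℝ) := {p | IsDist n p ∧ Exchangeable n p}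

/-- `O(u)`: the labelled trees in `RB_L(n)` whose shape is (the shape of) `u`. -/
def orbitSet (n : ℕ) (u : UTree) : Set (RBT ℕ) :=
  {T | IsPhylo n T ∧ T.shape = RBT.canon u}

/-- `p_u`: the exchangeable distribution that is uniform on `O(u)` and zero
elsewhere. -/
noncomputable def pShape (n : ℕ) (u : UTree) : RBT ℕ → ℝ := fun T =>
  if IsPhylo n T ∧ T.shape = RBT.canon u then ((orbitSet n u).ncard : ℝ)⁻¹ else 0

/-- Marginalization map `π_n` from distributions on `RB_L(m)` to distributions on
`RB_L(n)`: `π_n(p)(T) = Σ_{S ∈ RB_L(m), S|_{[n]} = T} p(S)`. -/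
noncomputable def marg (m n : ℕ) (p : RBT ℕ → ℝ) : RBT ℕ → ℝ := fun T =>
  ∑' S : RBT ℕ, if IsPhylo m S ∧ RBT.restrict (Finset.range n) S = some T then p S else 0

/-- `EX_n^m = π_n(EX_m)`: the `m`-sampling consistent exchangeable distributions
on `RB_L(n)`. -/
def EXP (n m : ℕ) : Set (RBT ℕ → ℝ) := marg m n '' EX m

/-- `EX_n^∞ = ⋂_{m ≥ n} EX_n^m`: the exchangeable and (infinitely) sampling
consistent distributions on `RB_L(n)`. -/
def EXinf (n : ℕ) : Set (RBT ℕ → ℝ) := ⋂ (m : ℕ) (_ : n ≤ m), EXP n m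

/-- The shapes with `n` leaves (`RB_U(n)`), encoded as canonical forms. -/
def ShapeOn (n : ℕ) : Type := {u : UTree // RBT.canon u = u ∧ u.numLeaves = n}

/-! ## Particular shapes -/

/-- The comb (caterpillar) shape `Comb_k` with `k` leaves. -/
def combU : ℕ → UTree
  | 0 => .leaf ()
  | 1 => .leaf ()
  | n + 2 => .node (.leaf ()) (combU (n + 1))

/-- `comb(t, k)`: the comb with `k` leaves in which one of the two deepest leaves
is replaced by the tree `t`. -/
def combWith (t : UTree) : ℕ → UTree
  | 0 => t
  | 1 => t
  | n + 2 => .node (.leaf ()) (combWith t (n + 1))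

/-- The balanced shape `Bal_4` on four leaves (two cherries joined at the root). -/
def bal4U : UTree := .node (.node (.leaf ()) (.leaf ())) (.node (.leaf ()) (.leaf ()))

/-- The giraffe shape `Gir_5 = comb(Bal_4, 2)` on five leaves. -/
def gir5U : UTree := combWith bal4U 2

/-- The balanced shape `Bal_5` on five leaves (a cherry and a three-leaf comb
joined at the root). -/
def bal5U : UTree := .node (.node (.leaf ()) (.leaf ())) (combU 3)

/-- `bicomb(a, b)`: the shape obtained by joining `Comb_a` and `Comb_b` at a new
root. -/
def bicombU (a b : ℕ) : UTree := .node (combU a) (combU b)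

/-- The complete balanced binary tree with `2^k` leaves. -/
def fullBal : ℕ → UTree
  | 0 => .leaf ()
  | k + 1 => .node (fullBal k) (fullBal k)

/-- A shape is maximally balanced if at every internal vertex the numbers of
leaves of the two child subtrees differ by at most one. -/
def IsMaxBalanced : UTree → Prop
  | .leaf _ => True
  | .node l r =>
      (l.numLeaves ≤ r.numLeaves + 1 ∧ r.numLeaves ≤ l.numLeaves + 1)
        ∧ IsMaxBalanced l ∧ IsMaxBalanced r

/-! ## Counting restriction subtrees -/

/-- Label the leaves of an unlabelled tree `0, 1, 2, …` from left to right
(auxiliary function threading the next fresh label). -/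
def labelFrom : UTree → ℕ → RBT ℕ × ℕ
  | .leaf _, k => (.leaf k, k + 1)
  | .node l r, k =>
      let pl := labelFrom l k
      let pr := labelFrom r pl.2
      (.node pl.1 pr.1, pr.2)

/-- A labelled representative of an unlabelled tree, with distinct leaf labels. -/
def label (u : UTree) : RBT ℕ := (labelFrom u 0).1

/-- The number of `k`-element subsets `A` of the leaves of (a labelled
representative of) `u` such that the restriction tree `u|_A` has shape `s`. -/
def countRestr (u : UTree) (s : UTree) (k : ℕ) : ℕ :=
  (((label u).leaves.toFinset.powersetCard k).filter
    (fun A => Option.map RBT.shape (RBT.restrict A (label u)) = some (RBT.canon s))).card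

/-- `c_5(u)`: the number of `5`-element subsets of the leaves of `u` whose
restriction tree is the five-leaf comb. -/
def c5 (u : UTree) : ℕ := countRestr u (combU 5) 5

/-! ## One-hole contexts (for subtree-swapping statements) -/

/-- One-hole contexts for unlabelled rooted binary trees: a position in a tree at
which a subtree may be substituted. -/
inductive Ctx : Type
  | hole : Ctx
  | nodeL (c : Ctx) (r : UTree) : Ctx
  | nodeR (l : UTree) (c : Ctx) : Ctx

/-- Fill the hole of a context with a tree. -/
def Ctx.fill : Ctx → UTree → UTree
  | .hole, t => t
  | .nodeL c r, t => .node (c.fill t) r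
  | .nodeR l c, t => .node l (c.fill t)

/-! ## The multinomial model -/

/-- A multiset of edges of a tree shape, encoded as the shape with a
multiplicity attached to every vertex (each vertex stands for the edge directly
above it; the root vertex stands for the root edge of the extended tree). -/
inductive MTree : Type
  | leaf (k : ℕ) : MTree
  | node (k : ℕ) (l r : MTree) : MTree
  deriving DecidableEq

namespace MTree

/-- The underlying tree shape of a multiplicity assignment. -/
def strip : MTree → UTree
  | leaf _ => .leaf ()
  | node _ l r => .node (strip l) (strip r)

/-- The total number of chosen edges (with multiplicity). -/
def total : MTree → ℕ
  | leaf k => k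
  | node k l r => k + total l + total r

/-- The product of the factorials of the multiplicities (denominator of the
multinomial coefficient). -/
def factProd : MTree → ℕ
  | leaf k => k.factorial
  | node k l r => k.factorial * factProd l * factProd r

/-- The product `Π_e t_e^{m_A(e)}` of edge-parameter powers, for the parameter
vector assigning `c` to every pendant edge and `0` to every other edge. -/
noncomputable def wProd (c : ℝ) : MTree → ℝ
  | leaf k => c ^ k
  | node k l r => (0 : ℝ) ^ k * wProd c l * wProd c r

/-- Join two optional trees at a new root. -/
def mergeO : Option UTree → Option UTree → Option UTree
  | some l, some r => some (.node l r)
  | some l, none => some l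
  | none, some r => some r
  | none, none => none

/-- Attach `k` new leaves along the edge above an (optional) already-built tree. -/
def attach : ℕ → Option UTree → Option UTree
  | 0, s => s
  | k + 1, s =>
      match attach k s with
      | none => some (.leaf ())
      | some t => some (.node (.leaf ()) t)

/-- `T_A`: attach one new leaf to an edge for each of its occurrences in the
multiset `A`, and restrict the resulting tree to the new leaves. -/
def build : MTree → Option UTree
  | leaf k => attach k none
  | node k l r => attach k (mergeO (build l) (build r))

end MTree

/-- The probability, under the multinomial model on the shape `T` (with edge
parameter `c` on every pendant edge and `0` on every other edge), that a random
multiset `A` of `n` edges yields a tree `T_A` of shape `s`: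
`d(s) = Σ_{A, T_A = s} C(n; m_A) Π_e t_e^{m_A(e)}`. -/
noncomputable def multinomDist (T : UTree) (c : ℝ) (n : ℕ) (s : UTree) : ℝ :=
  ∑' a : MTree,
    if a.strip = T ∧ a.total = n ∧ Option.map RBT.canon a.build = some (RBT.canon s) then
      ((n.factorial : ℝ) / (a.factProd : ℝ)) * MTree.wProd c a
    else 0


open Set Finset

lemma aux_sum_pad {α M : Type*} [AddCommMonoid M] (t : Finset α) (N : ℕ)
    (hcard : t.card ≤ N) (F : α → M) :
    (∑ i : Fin N, if h : (i : ℕ) < t.card then F ((t.equivFin.symm ⟨i, h⟩ : t) : α) else 0)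
      = ∑ y ∈ t, F y := by
  classical
  set e := t.equivFin with he
  rw [← Finset.sum_filter_of_ne (p := fun i : Fin N => (i : ℕ) < t.card)
    (by intro i _ hne; by_contra h; exact hne (dif_neg h))]
  refine Finset.sum_bij' (fun i hi => ((e.symm ⟨i, (Finset.mem_filter.mp hi).2⟩ : t) : α))
    (fun y hy => Fin.castLE hcard (e ⟨y, hy⟩)) ?_ ?_ ?_ ?_ ?_
  · intro a ha; exact (e.symm _).2
  · intro y hy
    simp only [Finset.mem_filter, Finset.mem_univ, true_and, Fin.coe_castLE]
    exact (e ⟨y, hy⟩).2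
  · intro a ha
    apply Fin.ext
    simp only [Fin.coe_castLE, Subtype.coe_eta, Equiv.apply_symm_apply]
  · intro y hy
    simp only [Fin.coe_castLE, Fin.eta, Equiv.symm_apply_apply]
  · intro a ha
    rw [dif_pos (Finset.mem_filter.mp ha).2]

variable {E : Type*} [NormedAddCommGroup E] [NormedSpace ℝ E] [FiniteDimensional ℝ E]

lemma aux_caratheodory_fin {T : Set E} {x : E} (hx : x ∈ convexHull ℝ T) :
    ∃ (w : Fin (Module.finrank ℝ E + 1) → ℝ) (v : Fin (Module.finrank ℝ E + 1) → E),
      (∀ i, 0 ≤ w i) ∧ ∑ i, w i = 1 ∧ (∀ i, v i ∈ T) ∧ ∑ i, w i • v i = x := by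
  classical
  set d := Module.finrank ℝ E with hd
  rw [convexHull_eq_union] at hx
  simp only [Set.mem_iUnion] at hx
  obtain ⟨t, htT, hai, hxt⟩ := hx
  have hcard : t.card ≤ d + 1 := by
    have h1 := hai.card_le_finrank_succ
    have h2 : Module.finrank ℝ (vectorSpan ℝ (Set.range ((↑) : t → E))) ≤ d :=
      Submodule.finrank_le _
    have := h1.trans (by omega : Module.finrank ℝ (vectorSpan ℝ (Set.range ((↑) : t → E))) + 1 ≤ d + 1)
    simpa [Fintype.card_coe] using this
  have htne : t.Nonempty := by
    rcases t.eq_empty_or_nonempty with rfl | h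
    · simp at hxt
    · exact h
  obtain ⟨y₀, hy₀⟩ := htne
  rw [Finset.convexHull_eq] at hxt
  obtain ⟨w, hw0, hw1, hwx⟩ := hxt
  rw [t.centerMass_eq_of_sum_1 _ hw1] at hwx
  refine ⟨fun i => if h : (i : ℕ) < t.card then w ((t.equivFin.symm ⟨i, h⟩ : t) : E) else 0,
    fun i => if h : (i : ℕ) < t.card then ((t.equivFin.symm ⟨i, h⟩ : t) : E) else y₀,
    ?_, ?_, ?_, ?_⟩
  · intro i
    dsimp only
    split_ifs with h
    · exact hw0 _ (t.equivFin.symm ⟨i, h⟩).2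
    · exact le_refl 0
  · exact (aux_sum_pad t (d + 1) hcard w).trans hw1
  · intro i
    dsimp only
    split_ifs with h
    · exact htT (t.equivFin.symm ⟨i, h⟩).2
    · exact htT hy₀
  · have : ∀ i : Fin (d + 1),
        (if h : (i : ℕ) < t.card then w ((t.equivFin.symm ⟨i, h⟩ : t) : E) else 0) •
          (if h : (i : ℕ) < t.card then ((t.equivFin.symm ⟨i, h⟩ : t) : E) else y₀)
        = if h : (i : ℕ) < t.card then w ((t.equivFin.symm ⟨i, h⟩ : t) : E) •
            ((t.equivFin.symm ⟨i, h⟩ : t) : E) else 0 := by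
      intro i
      split_ifs with h
      · rfl
      · exact zero_smul ℝ y₀
    rw [Finset.sum_congr rfl fun i _ => this i]
    exact (aux_sum_pad t (d + 1) hcard (fun y => w y • y)).trans (by simpa [id] using hwx)

lemma aux_isCompact_convexHull {T : Set E} (hT : IsCompact T) :
    IsCompact (convexHull ℝ T) := by
  rcases T.eq_empty_or_nonempty with rfl | hne
  · simp
  set d := Module.finrank ℝ E with hd
  have himg : convexHull ℝ T =
      (fun p : (Fin (d + 1) → ℝ) × (Fin (d + 1) → E) => ∑ i, p.1 i • p.2 i) ''
        ((stdSimplex ℝ (Fin (d + 1))) ×ˢ (Set.univ.pi fun _ => T)) := by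
    apply Set.Subset.antisymm
    · intro x hx
      obtain ⟨w, v, hw0, hw1, hvT, hsum⟩ := aux_caratheodory_fin hx
      exact ⟨(w, v), ⟨⟨hw0, hw1⟩, fun i _ => hvT i⟩, hsum⟩
    · rintro x ⟨⟨w, v⟩, ⟨⟨hw0, hw1⟩, hv⟩, rfl⟩
      exact (convex_convexHull ℝ T).sum_mem (fun i _ => hw0 i) hw1
        (fun i _ => subset_convexHull ℝ T (hv i (Set.mem_univ i)))
  rw [himg]
  exact ((isCompact_stdSimplex (𝕜 := ℝ) (ι := Fin (d + 1))).prod (isCompact_univ_pi fun _ => hT)).image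
    (continuous_finset_sum _ fun i _ =>
      ((continuous_apply i).comp continuous_fst).smul ((continuous_apply i).comp continuous_snd))

/-- Let `(P_m)` be a nested sequence of polytopes in `ℝ^n`
(`P_{m+1} ⊆ P_m`), and let `L` be the set of limits of sequences `(v_m)` with
`v_m` a vertex (extreme point) of `P_m` for every `m`.  Then `⋂_m P_m` equals
the closure of the convex hull of `L`. -/
theorem iInter_polytopes_eq_closure_convexHull_vertex_limits
    (n : ℕ) (P : ℕ → Set (Fin n → ℝ))
    (hpoly : ∀ m, ∃ V : Finset (Fin n → ℝ), P m = convexHull ℝ (V : Set (Fin n → ℝ)))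
    (hnested : ∀ m, P (m + 1) ⊆ P m) :
    (⋂ m, P m) =
      closure (convexHull ℝ
        {x : Fin n → ℝ | ∃ v : ℕ → (Fin n → ℝ),
          (∀ m, v m ∈ Set.extremePoints ℝ (P m)) ∧
            Filter.Tendsto v Filter.atTop (nhds x)}) := by
  classical
  have hPc : ∀ m, IsCompact (P m) := fun m => by
    obtain ⟨V, hV⟩ := hpoly m; rw [hV]; exact V.finite_toSet.isCompact_convexHull ℝ
  have hPconv : ∀ m, Convex ℝ (P m) := fun m => by
    obtain ⟨V, hV⟩ := hpoly m; rw [hV]; exact convex_convexHull ℝ _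
  have hanti : Antitone P := antitone_nat_of_succ_le hnested
  set L := {x : Fin n → ℝ | ∃ v : ℕ → (Fin n → ℝ),
      (∀ m, v m ∈ Set.extremePoints ℝ (P m)) ∧
        Filter.Tendsto v Filter.atTop (nhds x)} with hLdef
  set K := ⋂ m, P m with hKdef
  have hKcl : IsClosed K := isClosed_iInter fun m => (hPc m).isClosed
  have hKc : IsCompact K := (hPc 0).of_isClosed_subset hKcl (Set.iInter_subset _ 0)
  have hKconv : Convex ℝ K := convex_iInter fun m => hPconv m
  have hLK : L ⊆ K := by
    rintro x ⟨v, hv, hvx⟩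
    refine Set.mem_iInter.2 fun k => ?_
    refine (hPc k).isClosed.mem_of_tendsto hvx ?_
    filter_upwards [Filter.eventually_ge_atTop k] with m hm
    exact hanti hm (extremePoints_subset (hv m))
  have hext : Set.extremePoints ℝ K ⊆ L := by
    intro x hx
    have hxK : x ∈ K := extremePoints_subset hx
    have hxP : ∀ m, x ∈ P m := fun m => Set.mem_iInter.1 hxK m
    have claimA : ∀ ε > (0:ℝ), ∃ N, ∀ m ≥ N,
        ∃ y ∈ Set.extremePoints ℝ (P m), dist y x < ε := by
      by_contra hcon
      push_neg at hcon
      obtain ⟨ε, hε, hbad⟩ := hcon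
      set S : ℕ → Set (Fin n → ℝ) := fun m => P m ∩ {y | ε ≤ dist y x} with hSdef
      have hhalf : IsClosed {y : Fin n → ℝ | ε ≤ dist y x} :=
        isClosed_le continuous_const (Continuous.dist continuous_id continuous_const)
      have hScl : ∀ m, IsClosed (S m) := fun m => (hPc m).isClosed.inter hhalf
      have hSc : ∀ m, IsCompact (S m) := fun m => (hPc m).inter_right hhalf
      have hSanti : Antitone S := fun a b hab => Set.inter_subset_inter_left _ (hanti hab)
      have hxconv : ∀ m, x ∈ convexHull ℝ (S m) := by
        intro m
        obtain ⟨m', hm', hbad'⟩ := hbad m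
        have h1 : Set.extremePoints ℝ (P m') ⊆ S m := fun y hy =>
          hSanti hm' ⟨extremePoints_subset hy, hbad' y hy⟩
        have h2 := hxP m'
        rw [← closure_convexHull_extremePoints (hPc m') (hPconv m')] at h2
        exact closure_minimal (convexHull_mono h1)
          (aux_isCompact_convexHull (hSc m)).isClosed h2
      set T := ⋂ m, S m with hTdef
      have hTcl : IsClosed T := isClosed_iInter hScl
      have hTc : IsCompact T := (hSc 0).of_isClosed_subset hTcl (Set.iInter_subset _ 0)
      have hxT : x ∈ convexHull ℝ T := by
        by_contra hxnT
        obtain ⟨f, u, hfu, hux⟩ := geometric_hahn_banach_closed_point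
          (convex_convexHull ℝ T) (aux_isCompact_convexHull hTc).isClosed hxnT
        set B : ℕ → Set (Fin n → ℝ) := fun m => S m ∩ {y | u ≤ f y} with hBdef
        have hfcl : IsClosed {y : Fin n → ℝ | u ≤ f y} :=
          isClosed_le continuous_const f.continuous
        have hBcl : ∀ m, IsClosed (B m) := fun m => (hScl m).inter hfcl
        have hBc : ∀ m, IsCompact (B m) := fun m => (hSc m).inter_right hfcl
        have hBanti : Antitone B := fun a b hab =>
          Set.inter_subset_inter_left _ (hSanti hab)
        have hBempty : (⋂ m, B m) = ∅ := by
          apply Set.eq_empty_iff_forall_notMem.2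
          intro y hy
          have hyT : y ∈ T := Set.mem_iInter.2 fun m => (Set.mem_iInter.1 hy m).1
          exact absurd (Set.mem_iInter.1 hy 0).2
            (not_le.2 (hfu y (subset_convexHull ℝ T hyT)))
        have hone : ∃ m, ¬ (B m).Nonempty := by
          by_contra hall
          push_neg at hall
          have := IsCompact.nonempty_iInter_of_directed_nonempty_isCompact_isClosed B
            (fun a b => ⟨max a b, hBanti (le_max_left a b), hBanti (le_max_right a b)⟩)
            hall hBc hBcl
          rw [hBempty] at this
          exact Set.not_nonempty_empty this
        obtain ⟨m₀, hm₀⟩ := hone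
        have hSm₀ : S m₀ ⊆ {y | f y < u} := fun y hy => show f y < u from
          lt_of_not_ge fun hle => hm₀ ⟨y, hy, hle⟩
        have hxlt : x ∈ {y : Fin n → ℝ | f y < u} :=
          convexHull_min hSm₀ (convex_halfSpace_lt (f : (Fin n → ℝ) →ₗ[ℝ] ℝ).isLinear u)
            (hxconv m₀)
        exact absurd hux (not_lt.2 (le_of_lt hxlt))
      have hKd : Convex ℝ (K \ {x}) := ((hKconv.mem_extremePoints_iff_convex_diff).1 hx).2
      have hTKd : T ⊆ K \ {x} := by
        intro y hy
        refine ⟨Set.mem_iInter.2 fun m => (Set.mem_iInter.1 hy m).1, fun hyx => ?_⟩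
        have h0 := (Set.mem_iInter.1 hy 0).2
        rw [Set.mem_singleton_iff.1 hyx] at h0
        simp only [Set.mem_setOf_eq, dist_self] at h0
        linarith
      exact (convexHull_min hTKd hKd hxT).2 rfl
    have hVne : ∀ m, (Set.extremePoints ℝ (P m)).Nonempty := fun m =>
      (hPc m).extremePoints_nonempty ⟨x, hxP m⟩
    have hVfin : ∀ m, (Set.extremePoints ℝ (P m)).Finite := fun m => by
      obtain ⟨V, hV⟩ := hpoly m
      exact V.finite_toSet.subset (by rw [hV]; exact extremePoints_convexHull_subset)
    have hmin : ∀ m, ∃ y ∈ Set.extremePoints ℝ (P m),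
        ∀ z ∈ Set.extremePoints ℝ (P m), dist y x ≤ dist z x := fun m =>
      Set.exists_min_image _ _ (hVfin m) (hVne m)
    choose v hv hvmin using hmin
    refine ⟨v, hv, ?_⟩
    rw [Metric.tendsto_atTop]
    intro ε hε
    obtain ⟨N, hN⟩ := claimA ε hε
    refine ⟨N, fun m hm => ?_⟩
    obtain ⟨y, hy, hyd⟩ := hN m hm
    exact lt_of_le_of_lt (hvmin m y hy) hyd
  apply Set.Subset.antisymm
  · rw [← closure_convexHull_extremePoints hKc hKconv]
    exact closure_mono (convexHull_mono hext)
  · exact closure_minimal (convexHull_min hLK hKconv) hKcl
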